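/- For every j ∈ ℕ, j ≥ 1: if there exists k ∈ ℕ, k ≥ 1, with 2^{2^k} − k ≤ j ≤ 2^{2^k} + 2k, then b(j) ≤ log₂ j; otherwise b(j) ≤ 2. -/

import Mathlib

noncomputable section
open Real

-- The sequence `a : ℤ → ℝ` from (2.2): a(j) = log₂ j if j = i + 2^{2^k} for some
-- k ∈ ℕ, k ≥ 1, and i ∈ ℤ with -k ≤ i ≤ k; a(j) = 1 otherwise.
open Classical in
def aSeq (j : ℤ) : ℝ :=
  if ∃ k : ℕ, 1 ≤ k ∧ ∃ i : ℤ, -(k:ℤ) ≤ i ∧ i ≤ (k:ℤ) ∧ j = i + 2^(2^k)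
  then Real.logb 2 (j : ℝ) else 1

/-- `b(j) = 2^{-j-1} ∑_{i=1}^j 2^i a(i)` from (3.1). -/
def bSeq (j : ℕ) : ℝ := (2:ℝ)^(-(j:ℤ)-1) * ∑ i ∈ Finset.Icc 1 j, (2:ℝ)^(i:ℕ) * aSeq (i:ℤ)

/-- `j₀(m) = ⌈log₂ m⌉ + 1`. -/
def j0 (m : ℕ) : ℕ := ⌈Real.logb 2 (m:ℝ)⌉₊ + 1

/-! ### Auxiliary material -/

/-- The "special" predicate on naturals. -/
def Psp (i : ℕ) : Prop :=
  ∃ k : ℕ, 1 ≤ k ∧ ∃ t : ℤ, -(k:ℤ) ≤ t ∧ t ≤ (k:ℤ) ∧ (i:ℤ) = t + 2^(2^k)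

open Classical in
/-- A choice of block index for a special `i`. -/
def Kof (i : ℕ) : ℕ := if h : Psp i then h.choose else 0

lemma Kof_spec {i : ℕ} (h : Psp i) :
    1 ≤ Kof i ∧ ∃ t : ℤ, -(Kof i:ℤ) ≤ t ∧ t ≤ (Kof i:ℤ) ∧ (i:ℤ) = t + 2^(2^(Kof i)) := by
  rw [Kof, dif_pos h]
  exact h.choose_spec

lemma aux_lin (k : ℕ) (hk : 1 ≤ k) : 2*k + 2 ≤ 2^(2^k) := by
  have h1 : k + 1 ≤ 2^k := Nat.lt_two_pow_self (n := k)
  have h2 : 2^(k+1) ≤ 2^(2^k) := Nat.pow_le_pow_right (by norm_num) h1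
  have : 2*(k+1) ≤ 2^(k+1) := by
    rw [pow_succ]; omega
  omega

lemma aux_jump {k₁ k₂ : ℕ} (hk : 1 ≤ k₁) (hlt : k₁ < k₂) :
    2^(2^k₁) + 2*k₁ < 2^(2^k₂) := by
  have hm : 2*k₁ + 2 ≤ 2^(2^k₁) := aux_lin k₁ hk
  have hsq : 2^(2^(k₁+1)) = (2^(2^k₁)) * (2^(2^k₁)) := by
    rw [pow_succ, pow_mul]; ring
  have hmono : 2^(2^(k₁+1)) ≤ 2^(2^k₂) :=
    Nat.pow_le_pow_right (by norm_num) (Nat.pow_le_pow_right (by norm_num) hlt)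
  nlinarith [hm, hmono, hsq]

/-- For special `i`, natural-number bounds on `i` relative to its block. -/
lemma Kof_bounds {i : ℕ} (h : Psp i) :
    1 ≤ Kof i ∧ 2^(2^(Kof i)) ≤ i + Kof i ∧ i ≤ 2^(2^(Kof i)) + Kof i := by
  obtain ⟨hk, t, ht1, ht2, ht3⟩ := Kof_spec h
  refine ⟨hk, ?_, ?_⟩
  · have : ((2:ℤ)^(2^(Kof i))) ≤ (i:ℤ) + Kof i := by omega
    exact_mod_cast (by push_cast; omega : ((2^(2^(Kof i)) : ℕ) : ℤ) ≤ ((i + Kof i : ℕ) : ℤ))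
  · have : (i:ℤ) ≤ (2:ℤ)^(2^(Kof i)) + Kof i := by omega
    exact_mod_cast (by push_cast; omega : ((i : ℕ) : ℤ) ≤ ((2^(2^(Kof i)) + Kof i : ℕ) : ℤ))

lemma geom_Icc_le (j : ℕ) : ∑ i ∈ Finset.Icc 1 j, (2:ℝ)^i ≤ 2^(j+1) := by
  have hsub : Finset.Icc 1 j ⊆ Finset.range (j+1) := by
    intro x hx; simp only [Finset.mem_Icc] at hx; simp only [Finset.mem_range]; omega
  calc ∑ i ∈ Finset.Icc 1 j, (2:ℝ)^i
      ≤ ∑ i ∈ Finset.range (j+1), (2:ℝ)^i :=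
        Finset.sum_le_sum_of_subset_of_nonneg hsub (fun i _ _ => by positivity)
    _ = 2^(j+1) - 1 := by rw [geom_sum_eq (by norm_num)]; norm_num
    _ ≤ 2^(j+1) := by linarith

lemma logb_two_pow (n : ℕ) : Real.logb 2 ((2:ℝ)^n) = n := by
  rw [Real.logb_pow, Real.logb_self_eq_one (by norm_num)]; ring

open Classical in
lemma aSeq_eq (i : ℕ) : aSeq (i:ℤ) = if Psp i then Real.logb 2 (i:ℝ) else 1 := by
  unfold aSeq Psp
  norm_num

/-- For special `i ≥ 1`: `log₂ i ≤ 2^(Kof i) + 1`. -/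
lemma logb_special_le {i : ℕ} (hi : 1 ≤ i) (h : Psp i) :
    Real.logb 2 (i:ℝ) ≤ 2^(Kof i) + 1 := by
  obtain ⟨hk, hlo, hhi⟩ := Kof_bounds h
  have hkm : Kof i ≤ 2^(2^(Kof i)) := by
    have := aux_lin (Kof i) hk; omega
  have hle : i ≤ 2^(2^(Kof i) + 1) := by
    rw [pow_succ]; omega
  have hleR : (i:ℝ) ≤ (2:ℝ)^(2^(Kof i) + 1) := by
    calc (i:ℝ) ≤ ((2^(2^(Kof i) + 1) : ℕ) : ℝ) := by exact_mod_cast hle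
      _ = (2:ℝ)^(2^(Kof i) + 1) := by push_cast; ring
  have hpos : (0:ℝ) < (i:ℝ) := by exact_mod_cast hi
  have := (Real.logb_le_logb (by norm_num : (1:ℝ) < 2) hpos (by positivity)).mpr hleR
  calc Real.logb 2 (i:ℝ) ≤ Real.logb 2 ((2:ℝ)^(2^(Kof i) + 1)) := this
    _ = (2^(Kof i) + 1 : ℕ) := logb_two_pow _
    _ = 2^(Kof i) + 1 := by push_cast; ring

lemma zpow_cancel (j : ℕ) : (2:ℝ)^(-(j:ℤ)-1) * (2:ℝ)^(j+1) = 1 := by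
  have h1 : ((2:ℝ)^(j+1) : ℝ) = (2:ℝ)^(((j:ℤ))+1) := by
    rw [show ((j:ℤ)+1) = ((j+1 : ℕ) : ℤ) by push_cast; ring, zpow_natCast]
  rw [h1, ← zpow_add₀ (by norm_num : (2:ℝ) ≠ 0)]
  norm_num

/-- For every `j ∈ ℕ`, `j ≥ 1`: if there exists `k ∈ ℕ`, `k ≥ 1`, with
`2^{2^k} − k ≤ j ≤ 2^{2^k} + 2k`, then `b(j) ≤ log₂ j`; otherwise `b(j) ≤ 2`. -/
theorem stmt7 (j : ℕ) (hj : 1 ≤ j) :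
    ((∃ k : ℕ, 1 ≤ k ∧ (2:ℤ)^(2^k) - (k:ℤ) ≤ (j:ℤ) ∧ (j:ℤ) ≤ 2^(2^k) + 2*(k:ℤ)) →
      bSeq j ≤ Real.logb 2 (j:ℝ)) ∧
    (¬ (∃ k : ℕ, 1 ≤ k ∧ (2:ℤ)^(2^k) - (k:ℤ) ≤ (j:ℤ) ∧ (j:ℤ) ≤ 2^(2^k) + 2*(k:ℤ)) →
      bSeq j ≤ 2) := by
  classical
  have hzpos : (0:ℝ) < (2:ℝ)^(-(j:ℤ)-1) := by positivity
  constructor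
  · -- Case 1
    rintro ⟨k, hk1, hlo, hhi⟩
    -- j ≥ 2
    have hm : 2*k + 2 ≤ 2^(2^k) := aux_lin k hk1
    have hmz : (2*(k:ℤ) + 2) ≤ (2:ℤ)^(2^k) := by exact_mod_cast hm
    have hj2 : 2 ≤ j := by
      have : (2:ℤ) ≤ (j:ℤ) := by omega
      exact_mod_cast this
    have hlogb1 : (1:ℝ) ≤ Real.logb 2 (j:ℝ) := by
      have h2j : (2:ℝ) ≤ (j:ℝ) := by exact_mod_cast hj2
      calc (1:ℝ) = Real.logb 2 2 := (Real.logb_self_eq_one (by norm_num)).symm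
        _ ≤ Real.logb 2 (j:ℝ) :=
          (Real.logb_le_logb (by norm_num) (by norm_num) (by linarith)).mpr h2j
    have hlogb0 : (0:ℝ) ≤ Real.logb 2 (j:ℝ) := by linarith
    have hpt : ∀ i ∈ Finset.Icc 1 j, (2:ℝ)^i * aSeq (i:ℤ) ≤ (2:ℝ)^i * Real.logb 2 (j:ℝ) := by
      intro i hi
      simp only [Finset.mem_Icc] at hi
      rw [aSeq_eq]
      apply mul_le_mul_of_nonneg_left _ (by positivity)
      by_cases hP : Psp i
      · rw [if_pos hP]
        exact (Real.logb_le_logb (by norm_num) (by exact_mod_cast hi.1)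
          (by exact_mod_cast lt_of_lt_of_le Nat.zero_lt_one (le_trans hi.1 hi.2))).mpr
          (by exact_mod_cast hi.2)
      · rw [if_neg hP]; exact hlogb1
    have hsum : ∑ i ∈ Finset.Icc 1 j, (2:ℝ)^i * aSeq (i:ℤ)
        ≤ Real.logb 2 (j:ℝ) * 2^(j+1) := by
      calc ∑ i ∈ Finset.Icc 1 j, (2:ℝ)^i * aSeq (i:ℤ)
          ≤ ∑ i ∈ Finset.Icc 1 j, (2:ℝ)^i * Real.logb 2 (j:ℝ) := Finset.sum_le_sum hpt
        _ = Real.logb 2 (j:ℝ) * ∑ i ∈ Finset.Icc 1 j, (2:ℝ)^i := by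
            rw [Finset.mul_sum]; apply Finset.sum_congr rfl; intro i _; ring
        _ ≤ Real.logb 2 (j:ℝ) * 2^(j+1) :=
            mul_le_mul_of_nonneg_left (geom_Icc_le j) hlogb0
    calc bSeq j ≤ (2:ℝ)^(-(j:ℤ)-1) * (Real.logb 2 (j:ℝ) * 2^(j+1)) := by
          rw [bSeq]; exact mul_le_mul_of_nonneg_left hsum (le_of_lt hzpos)
      _ = Real.logb 2 (j:ℝ) * ((2:ℝ)^(-(j:ℤ)-1) * (2:ℝ)^(j+1)) := by ring
      _ = Real.logb 2 (j:ℝ) := by rw [zpow_cancel]; ring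
  · -- Case 2
    intro hno
    -- Key fact: for special i ≤ j, the interval for its block is entirely below j
    have hkey : ∀ i ∈ Finset.Icc 1 j, Psp i → 2^(2^(Kof i)) + 2*(Kof i) < j := by
      intro i hi hP
      simp only [Finset.mem_Icc] at hi
      obtain ⟨hk, hlo, hhi⟩ := Kof_bounds hP
      by_contra hcon
      push_neg at hcon
      apply hno
      refine ⟨Kof i, hk, ?_, ?_⟩
      · have h1 : 2^(2^(Kof i)) ≤ i + Kof i := hlo
        have : ((2^(2^(Kof i)) : ℕ) : ℤ) ≤ (i:ℤ) + (Kof i : ℤ) := by exact_mod_cast h1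
        have h2 : (i:ℤ) ≤ (j:ℤ) := by exact_mod_cast hi.2
        push_cast at this ⊢
        omega
      · have : (j:ℤ) ≤ ((2^(2^(Kof i)) + 2*(Kof i) : ℕ) : ℤ) := by exact_mod_cast hcon
        push_cast at this ⊢
        omega
    set S := (Finset.Icc 1 j).filter Psp with hS
    -- φ values are < j
    have hφlt : ∀ i ∈ S, i + Kof i < j := by
      intro i hiS
      rw [hS, Finset.mem_filter] at hiS
      obtain ⟨hi, hP⟩ := hiS
      have h1 := hkey i hi hP
      obtain ⟨hk, hlo, hhi⟩ := Kof_bounds hP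
      omega
    -- injectivity of φ on S
    have hinj : ∀ i₁ ∈ S, ∀ i₂ ∈ S, i₁ + Kof i₁ = i₂ + Kof i₂ → i₁ = i₂ := by
      intro i₁ h₁ i₂ h₂ heq
      rw [hS, Finset.mem_filter] at h₁ h₂
      obtain ⟨hk₁, hlo₁, hhi₁⟩ := Kof_bounds h₁.2
      obtain ⟨hk₂, hlo₂, hhi₂⟩ := Kof_bounds h₂.2
      rcases lt_trichotomy (Kof i₁) (Kof i₂) with hlt | heqk | hgt
      · have := aux_jump hk₁ hlt
        omega
      · omega
      · have := aux_jump hk₂ hgt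
        omega
    -- pointwise bound
    have hpt : ∀ i ∈ Finset.Icc 1 j, (2:ℝ)^i * aSeq (i:ℤ)
        ≤ (2:ℝ)^i + (if Psp i then (2:ℝ)^(i + Kof i) else 0) := by
      intro i hi
      simp only [Finset.mem_Icc] at hi
      rw [aSeq_eq]
      by_cases hP : Psp i
      · rw [if_pos hP, if_pos hP]
        have hlog := logb_special_le hi.1 hP
        have h2 : (2:ℝ)^(i + Kof i) = (2:ℝ)^i * (2:ℝ)^(Kof i) := pow_add 2 i (Kof i)
        have h3 : (2:ℝ)^i * Real.logb 2 (i:ℝ) ≤ (2:ℝ)^i * ((2:ℝ)^(Kof i) + 1) := by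
          apply mul_le_mul_of_nonneg_left _ (by positivity)
          calc Real.logb 2 (i:ℝ) ≤ ((2:ℕ)^(Kof i) : ℝ) + 1 := by exact_mod_cast hlog
            _ = (2:ℝ)^(Kof i) + 1 := by push_cast; ring
        calc (2:ℝ)^i * Real.logb 2 (i:ℝ) ≤ (2:ℝ)^i * ((2:ℝ)^(Kof i) + 1) := h3
          _ = (2:ℝ)^i + (2:ℝ)^(i + Kof i) := by rw [h2]; ring
      · rw [if_neg hP, if_neg hP]
        simp
    -- bound for the excess sum
    have hexc : ∑ i ∈ Finset.Icc 1 j, (if Psp i then (2:ℝ)^(i + Kof i) else 0)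
        ≤ 2^(j+1) := by
      rw [← Finset.sum_filter, ← hS]
      have himg : ∑ i ∈ S, (2:ℝ)^(i + Kof i)
          = ∑ n ∈ S.image (fun i => i + Kof i), (2:ℝ)^n :=
        (Finset.sum_image hinj).symm
      rw [himg]
      have hsub : S.image (fun i => i + Kof i) ⊆ Finset.range j := by
        intro n hn
        simp only [Finset.mem_image] at hn
        obtain ⟨i, hiS, rfl⟩ := hn
        simp only [Finset.mem_range]
        exact hφlt i hiS
      calc ∑ n ∈ S.image (fun i => i + Kof i), (2:ℝ)^n
          ≤ ∑ n ∈ Finset.range j, (2:ℝ)^n :=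
            Finset.sum_le_sum_of_subset_of_nonneg hsub (fun n _ _ => by positivity)
        _ = 2^j - 1 := by rw [geom_sum_eq (by norm_num)]; norm_num
        _ ≤ 2^(j+1) := by
            have : (2:ℝ)^j ≤ 2^(j+1) := by
              apply pow_le_pow_right₀ (by norm_num); omega
            linarith
    have hsum : ∑ i ∈ Finset.Icc 1 j, (2:ℝ)^i * aSeq (i:ℤ)
        ≤ 2^(j+1) + 2^(j+1) := by
      calc ∑ i ∈ Finset.Icc 1 j, (2:ℝ)^i * aSeq (i:ℤ)
          ≤ ∑ i ∈ Finset.Icc 1 j, ((2:ℝ)^i + (if Psp i then (2:ℝ)^(i + Kof i) else 0)) :=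
            Finset.sum_le_sum hpt
        _ = ∑ i ∈ Finset.Icc 1 j, (2:ℝ)^i
            + ∑ i ∈ Finset.Icc 1 j, (if Psp i then (2:ℝ)^(i + Kof i) else 0) :=
            Finset.sum_add_distrib
        _ ≤ 2^(j+1) + 2^(j+1) := add_le_add (geom_Icc_le j) hexc
    calc bSeq j ≤ (2:ℝ)^(-(j:ℤ)-1) * ((2:ℝ)^(j+1) + (2:ℝ)^(j+1)) := by
          rw [bSeq]; exact mul_le_mul_of_nonneg_left hsum (le_of_lt hzpos)
      _ = 2 * ((2:ℝ)^(-(j:ℤ)-1) * (2:ℝ)^(j+1)) := by ring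
      _ = 2 := by rw [zpow_cancel]; ring
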